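/- Define a system S of digital line segments on ℤ² as follows: for p = (p_x,p_y) and q = (q_x,q_y) with p_y ≤ q_y, let S(p,q) = {(x, p_y) : min(p_x,q_x) ≤ x ≤ max(p_x,q_x)} ∪ {(q_x, y) : p_y ≤ y ≤ q_y}, and for p_y > q_y let S(p,q) = S(q,p). Then S is a consistent digital line segments system, i.e., it satisfies axioms (S1)–(S5). -/

import Mathlib

/- `upAt prec p q t` : the level `t` is among the `q.2 - p.2` greatest elements
(w.r.t. the order `prec`) of the segment interval `[p.1+p.2, q.1+q.2-1]`. -/
open Classical in
noncomputable def upAt (prec : ℤ → ℤ → Prop) (p q : ℤ × ℤ) (t : ℤ) : Prop :=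
  (((Finset.Ico (p.1 + p.2) (q.1 + q.2)).filter (fun u => u = t ∨ prec t u)).card : ℤ)
    ≤ q.2 - p.2

/- The digital segment derived from `prec`, for `p.1 ≤ q.1` and `p.2 ≤ q.2`:
the monotone staircase from `p` to `q` that goes up at level `t` exactly when
`upAt prec p q t` holds. -/
open Classical in
noncomputable def digSegNE (prec : ℤ → ℤ → Prop) (p q : ℤ × ℤ) : Set (ℤ × ℤ) :=
  { r | p.1 + p.2 ≤ r.1 + r.2 ∧ r.1 + r.2 ≤ q.1 + q.2 ∧
    r.2 = p.2 + (((Finset.Ico (p.1 + p.2) (r.1 + r.2)).filter (fun t => upAt prec p q t)).card : ℤ) }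

/- The digital segment for `p.1 ≤ q.1` (reflecting over the `y`-axis if `p.2 > q.2`). -/
noncomputable def digSegAux (prec : ℤ → ℤ → Prop) (p q : ℤ × ℤ) : Set (ℤ × ℤ) :=
  if p.2 ≤ q.2 then digSegNE prec p q
  else (fun r : ℤ × ℤ => (-r.1, r.2)) '' digSegNE prec (-q.1, q.2) (-p.1, p.2)

/- The full system of digital segments `S_≺` derived from the order `prec`. -/
noncomputable def digSeg (prec : ℤ → ℤ → Prop) (p q : ℤ × ℤ) : Set (ℤ × ℤ) :=
  if p.1 ≤ q.1 then digSegAux prec p q else digSegAux prec q p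

/- Adjacency in the grid graph on `ℤ²`. -/
def GridAdj (p q : ℤ × ℤ) : Prop :=
  (|q.1 - p.1| = 1 ∧ q.2 = p.2) ∨ (q.1 = p.1 ∧ |q.2 - p.2| = 1)

/- `S` is the vertex set of a path from `p` to `q` in the grid graph on `ℤ²`. -/
def IsGridPath (p q : ℤ × ℤ) (S : Set (ℤ × ℤ)) : Prop :=
  ∃ n : ℕ, ∃ f : Fin (n + 1) → ℤ × ℤ, f 0 = p ∧ f (Fin.last n) = q ∧
    Function.Injective f ∧ (∀ i : Fin n, GridAdj (f i.castSucc) (f i.succ)) ∧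
    Set.range f = S

/- A consistent digital line segments system (CDS): axioms (S1)-(S5). -/
structure IsCDS (S : ℤ × ℤ → ℤ × ℤ → Set (ℤ × ℤ)) : Prop where
  path : ∀ p q, IsGridPath p q (S p q)                     -- (S1)
  symm : ∀ p q, S p q = S q p                               -- (S2)
  subseg : ∀ p q r, r ∈ S p q → S p r ⊆ S p q               -- (S3)
  prolong : ∀ p q, ∃ r, r ∉ S p q ∧ S p q ⊆ S p r           -- (S4)
  monoV : ∀ p q, p.1 = q.1 → ∀ r ∈ S p q, r.1 = p.1         -- (S5), vertical
  monoH : ∀ p q, p.2 = q.2 → ∀ r ∈ S p q, r.2 = p.2         -- (S5), horizontal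

/- The inclusion `ℤ² ⊆ ℝ²` (Euclidean plane). -/
noncomputable def toR2 (p : ℤ × ℤ) : EuclideanSpace ℝ (Fin 2) := WithLp.toLp 2 ![(p.1 : ℝ), (p.2 : ℝ)]

/- The 2-adic valuation of an integer, with `v2 0 = ⊤`. -/
noncomputable def v2 (k : ℤ) : ℕ∞ := if k = 0 then ⊤ else (padicValInt 2 k : ℕ∞)

/- The total order on `ℤ` defined via 2-adic valuations. -/
def vorder (a b : ℤ) : Prop :=
  ∃ i : ℕ, v2 (a - i) < v2 (b - i) ∧ ∀ j : ℕ, j < i → v2 (a - j) = v2 (b - j)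
/- The "box boundary" digital segment system: from the endpoint with smaller
`y`-coordinate, go horizontally to the vertical line of the other endpoint, then
go up. -/
def boxSeg (p q : ℤ × ℤ) : Set (ℤ × ℤ) :=
  if p.2 ≤ q.2 then
    {r : ℤ × ℤ | r.2 = p.2 ∧ min p.1 q.1 ≤ r.1 ∧ r.1 ≤ max p.1 q.1} ∪
      {r : ℤ × ℤ | r.1 = q.1 ∧ p.2 ≤ r.2 ∧ r.2 ≤ q.2}
  else
    {r : ℤ × ℤ | r.2 = q.2 ∧ min p.1 q.1 ≤ r.1 ∧ r.1 ≤ max p.1 q.1} ∪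
      {r : ℤ × ℤ | r.1 = p.1 ∧ q.2 ≤ r.2 ∧ r.2 ≤ p.2}

private lemma gridAdj_symm' {p q : ℤ × ℤ} (h : GridAdj p q) : GridAdj q p := by
  rcases h with ⟨h1, h2⟩ | ⟨h1, h2⟩
  · exact Or.inl ⟨by rw [abs_sub_comm]; exact h1, h2.symm⟩
  · exact Or.inr ⟨h1.symm, by rw [abs_sub_comm]; exact h2⟩

private lemma gridAdj_iff' (p q : ℤ × ℤ) : GridAdj p q ↔
    ((q.1 - p.1 = 1 ∨ q.1 - p.1 = -1) ∧ q.2 = p.2) ∨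
      (q.1 = p.1 ∧ (q.2 - p.2 = 1 ∨ q.2 - p.2 = -1)) := by
  unfold GridAdj
  rw [abs_eq (by norm_num : (0:ℤ) ≤ 1), abs_eq (by norm_num : (0:ℤ) ≤ 1)]

private lemma isGridPath_symm' {p q : ℤ × ℤ} {S : Set (ℤ × ℤ)}
    (h : IsGridPath p q S) : IsGridPath q p S := by
  obtain ⟨n, f, h0, hl, hinj, hadj, hr⟩ := h
  refine ⟨n, fun i => f i.rev, ?_, ?_, ?_, ?_, ?_⟩
  · show f (Fin.rev 0) = q
    rw [Fin.rev_zero]; exact hl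
  · show f (Fin.last n).rev = p
    rw [Fin.rev_last]; exact h0
  · exact hinj.comp Fin.rev_injective
  · intro i
    show GridAdj (f i.castSucc.rev) (f i.succ.rev)
    rw [Fin.rev_castSucc, Fin.rev_succ]
    exact gridAdj_symm' (hadj i.rev)
  · rw [← hr]
    exact Function.Surjective.range_comp Fin.rev_surjective f

private def gfun (px qx py : ℤ) (a : ℕ) (k : ℕ) : ℤ × ℤ :=
  if k ≤ a then ((if px ≤ qx then px + (k : ℤ) else px - (k : ℤ)), py)
  else (qx, py + ((k : ℤ) - (a : ℤ)))

private lemma lpath (p q : ℤ × ℤ) (h : p.2 ≤ q.2) :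
    IsGridPath p q
      ({r : ℤ × ℤ | r.2 = p.2 ∧ min p.1 q.1 ≤ r.1 ∧ r.1 ≤ max p.1 q.1} ∪
        {r : ℤ × ℤ | r.1 = q.1 ∧ p.2 ≤ r.2 ∧ r.2 ≤ q.2}) := by
  obtain ⟨px, py⟩ := p
  obtain ⟨qx, qy⟩ := q
  dsimp only at h ⊢
  have hA := Int.natAbs_eq (qx - px)
  have hB : ((qy - py).toNat : ℤ) = qy - py := Int.toNat_of_nonneg (by omega)
  set a : ℕ := (qx - px).natAbs with ha
  set b : ℕ := (qy - py).toNat with hb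
  refine ⟨a + b, fun i => gfun px qx py a i.val, ?_, ?_, ?_, ?_, ?_⟩
  · show gfun px qx py a (0 : Fin (a + b + 1)).val = (px, py)
    simp only [Fin.val_zero, gfun]
    split_ifs <;> simp_all <;> omega
  · show gfun px qx py a (Fin.last (a + b)).val = (qx, qy)
    simp only [Fin.val_last, gfun]
    split_ifs <;> simp only [Prod.mk.injEq, true_and, and_true] <;> (first | trivial | omega)
  · intro i j hij
    rw [Fin.ext_iff]
    simp only [gfun] at hij
    split_ifs at hij <;> simp only [Prod.mk.injEq, true_and, and_true] at hij <;> omega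
  · intro i
    show GridAdj (gfun px qx py a i.castSucc.val) (gfun px qx py a i.succ.val)
    rw [gridAdj_iff']
    simp only [gfun, Fin.coe_castSucc, Fin.val_succ]
    split_ifs <;> simp only [Prod.mk.injEq, true_and, and_true] <;> push_cast <;> (first | trivial | omega)
  · ext ⟨x, y⟩
    simp only [Set.mem_range, Set.mem_union, Set.mem_setOf_eq]
    constructor
    · rintro ⟨i, hi⟩
      have hiv : (i : ℕ) ≤ a + b := Nat.le_of_lt_succ i.isLt
      simp only [gfun] at hi
      split_ifs at hi <;> simp only [Prod.mk.injEq, true_and, and_true] at hi <;> omega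
    · rintro (⟨hy, h1, h2⟩ | ⟨hx, h1, h2⟩)
      · have hI := Int.natAbs_eq (x - px)
        refine ⟨⟨(x - px).natAbs, by omega⟩, ?_⟩
        simp only [gfun]
        split_ifs <;> simp only [Prod.mk.injEq, true_and, and_true] <;> (first | trivial | omega)
      · have hJ : ((y - py).toNat : ℤ) = y - py := Int.toNat_of_nonneg (by omega)
        refine ⟨⟨a + (y - py).toNat, by omega⟩, ?_⟩
        simp only [gfun]
        split_ifs <;> simp only [Prod.mk.injEq, true_and, and_true] <;> push_cast <;> (first | trivial | omega)


private lemma mem_boxSeg {p q r : ℤ × ℤ} : r ∈ boxSeg p q ↔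
    ((p.2 ≤ q.2 ∧ ((r.2 = p.2 ∧ min p.1 q.1 ≤ r.1 ∧ r.1 ≤ max p.1 q.1) ∨
        (r.1 = q.1 ∧ p.2 ≤ r.2 ∧ r.2 ≤ q.2))) ∨
      (q.2 < p.2 ∧ ((r.2 = q.2 ∧ min p.1 q.1 ≤ r.1 ∧ r.1 ≤ max p.1 q.1) ∨
        (r.1 = p.1 ∧ q.2 ≤ r.2 ∧ r.2 ≤ p.2)))) := by
  unfold boxSeg
  split_ifs with h <;> simp only [Set.mem_union, Set.mem_setOf_eq] <;> omega

theorem boxSeg_isCDS : IsCDS boxSeg := by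
  refine ⟨?_, ?_, ?_, ?_, ?_, ?_⟩
  · intro p q
    by_cases h : p.2 ≤ q.2
    · unfold boxSeg
      rw [if_pos h]
      exact lpath p q h
    · apply isGridPath_symm'
      have h' : q.2 ≤ p.2 := le_of_not_ge h
      have := lpath q p h'
      unfold boxSeg
      rw [if_neg h, min_comm p.1 q.1, max_comm p.1 q.1]
      exact this
  · intro p q
    ext r
    rw [mem_boxSeg, mem_boxSeg]
    omega
  · intro p q r hr t ht
    rw [mem_boxSeg] at hr ht ⊢
    omega
  · intro p q
    by_cases h : p.2 ≤ q.2
    · refine ⟨(q.1, q.2 + 1), ?_, ?_⟩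
      · rw [mem_boxSeg]; dsimp only; omega
      · intro t ht
        rw [mem_boxSeg] at ht ⊢
        dsimp only at *
        omega
    · by_cases h2 : p.1 ≤ q.1
      · refine ⟨(q.1 + 1, q.2), ?_, ?_⟩
        · rw [mem_boxSeg]; dsimp only; omega
        · intro t ht
          rw [mem_boxSeg] at ht ⊢
          dsimp only at *
          omega
      · refine ⟨(q.1 - 1, q.2), ?_, ?_⟩
        · rw [mem_boxSeg]; dsimp only; omega
        · intro t ht
          rw [mem_boxSeg] at ht ⊢
          dsimp only at *
          omega
  · intro p q h r hr
    rw [mem_boxSeg] at hr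
    omega
  · intro p q h r hr
    rw [mem_boxSeg] at hr
    omega
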